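/- Every inductive poset is divisional: if P ∈ IP then P ∈ DP. -/

import Mathlib

open scoped Classical
open Polynomial

noncomputable section

namespace PosetArr

/-- The rank of an element of a poset: the length of the longest chain
strictly below it. In a ranked poset this is the common length of all maximal
chains with greatest element `x`. -/
noncomputable def rk {α : Type*} [Preorder α] (x : α) : ℕ :=
  (Set.chainHeight (Set.Iio x) (· < ·)).toNat

/-- The rank of a (finite) poset: the maximal rank of an element. -/
noncomputable def prk (α : Type*) [Preorder α] [Fintype α] : ℕ :=
  Finset.univ.sup (rk (α := α))

/-- A finite poset is ranked iff covering relations increase `rk` by one;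
equivalently, for every `x` all maximal chains with greatest element `x`
have the same length. -/
def IsRanked (α : Type*) [Preorder α] : Prop :=
  ∀ x y : α, x ⋖ y → rk y = rk x + 1

/-- The set of atoms (elements of rank 1) of a poset. -/
def atoms (α : Type*) [Preorder α] : Set α := {x : α | rk x = 1}

/-- `joinSet T` is the join `⋁ T`: the set of minimal upper bounds of `T`. -/
def joinSet {α : Type*} [PartialOrder α] (T : Set α) : Set α :=
  {z | z ∈ upperBounds T ∧ ∀ w ∈ upperBounds T, w ≤ z → w = z}

/-- `meetSet T` is the meet `⋀ T`: the set of maximal lower bounds of `T`. -/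
def meetSet {α : Type*} [PartialOrder α] (T : Set α) : Set α :=
  {z | z ∈ lowerBounds T ∧ ∀ w ∈ lowerBounds T, z ≤ w → w = z}

/-- A poset is a lattice if any two elements have a unique minimal upper
bound and a unique maximal lower bound. -/
def IsLatticePoset (α : Type*) [PartialOrder α] : Prop :=
  ∀ x y : α, (∃! z, z ∈ joinSet {x, y}) ∧ (∃! z, z ∈ meetSet {x, y})

/-- A (finite) lattice is geometric if for all `x, y`: `y` covers `x` iff
there is an atom `a` with `a ≰ x` and `y = x ∨ a`. -/
def IsGeomLattice (α : Type*) [PartialOrder α] : Prop :=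
  IsLatticePoset α ∧
    ∀ x y : α, x ⋖ y ↔ ∃ a : α, a ∈ atoms α ∧ ¬a ≤ x ∧ y ∈ joinSet {x, a}

/-- A finite ranked poset is locally geometric if every lower interval
`P_{≤ x}` is a geometric lattice. -/
def IsLocallyGeometric (α : Type*) [PartialOrder α] : Prop :=
  IsRanked α ∧ ∀ x : α, IsGeomLattice {y : α // y ≤ x}

/-- The Möbius function of a finite poset. -/
noncomputable def mob {α : Type*} [PartialOrder α] [Fintype α] (a b : α) : ℤ :=
  if a = b then 1
  else if a < b then
    - ∑ c ∈ (Finset.univ.filter (fun c : α => a ≤ c ∧ c < b)).attach, mob a c.1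
  else 0
termination_by (Finset.univ.filter (fun c : α => c ≤ b)).card
decreasing_by
  have hc := c.2
  simp only [Finset.mem_filter, Finset.mem_univ, true_and] at hc
  apply Finset.card_lt_card
  constructor
  · intro z hz
    simp only [Finset.mem_filter, Finset.mem_univ, true_and] at hz ⊢
    exact hz.trans hc.2.le
  · intro hsub
    have hb : b ∈ Finset.univ.filter (fun z : α => z ≤ b) := by
      simp
    have := hsub hb
    simp only [Finset.mem_filter, Finset.mem_univ, true_and] at this
    exact absurd (lt_of_le_of_lt this hc.2) (lt_irrefl _)

/-- The characteristic polynomial of a finite ranked poset with `0̂`: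
`χ_P(t) = ∑_x μ(0̂,x) t^(rk(P) - rk(x))`. -/
noncomputable def charPoly (α : Type*) [PartialOrder α] [Fintype α] [OrderBot α] :
    Polynomial ℤ :=
  ∑ x : α, Polynomial.C (mob ⊥ x) * Polynomial.X ^ (prk α - rk x)

/-- The subposet of `P` generated by a set `B` of atoms: the minimal element
together with all joins of subsets of `B`. -/
def genSub {α : Type*} [PartialOrder α] [OrderBot α] (B : Set α) : Set α :=
  insert ⊥ {z | ∃ T ⊆ B, z ∈ joinSet T}

instance upperOrderBot {α : Type*} [PartialOrder α] (a : α) :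
    OrderBot {y : α // a ≤ y} where
  bot := ⟨a, le_rfl⟩
  bot_le y := y.2

instance genSubOrderBot {α : Type*} [PartialOrder α] [OrderBot α] (B : Set α) :
    OrderBot {y : α // y ∈ genSub B} where
  bot := ⟨⊥, Set.mem_insert _ _⟩
  bot_le y := bot_le

/-- `OrderBot` structure on a down-set containing `⊥`. -/
def subsetOrderBot {α : Type*} [PartialOrder α] [OrderBot α] {Q : Set α}
    (h : ⊥ ∈ Q) : OrderBot {y : α // y ∈ Q} where
  bot := ⟨⊥, h⟩
  bot_le y := bot_le

/-- The class of inductive posets: the smallest class of locally geometric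
posets containing the one-element poset and closed under the addition step:
`P ∈ IP` whenever there is an atom `a` such that `P'' = P_{≥a} ∈ IP`,
`P' = P(A(P) \ {a}) ∈ IP` and `χ_{P''} ∣ χ_{P'}`. -/
inductive IsInductivePoset :
    ∀ (β : Type) (po : PartialOrder β) (fin : Fintype β) (bo : OrderBot β), Prop where
  | triv (β : Type) [po : PartialOrder β] [fin : Fintype β] [bo : OrderBot β]
      (h : ∀ x : β, x = ⊥) : IsInductivePoset β po fin bo
  | step (β : Type) [po : PartialOrder β] [fin : Fintype β] [bo : OrderBot β]
      (hLG : IsLocallyGeometric β) (a : β) (ha : a ∈ atoms β)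
      (hres : IsInductivePoset {y : β // a ≤ y} inferInstance inferInstance inferInstance)
      (hdel : IsInductivePoset {y : β // y ∈ genSub (atoms β \ {a})}
        inferInstance inferInstance inferInstance)
      (hdvd : charPoly {y : β // a ≤ y} ∣ charPoly {y : β // y ∈ genSub (atoms β \ {a})}) :
      IsInductivePoset β po fin bo

/-- The class of divisional posets: the smallest class of locally geometric
posets containing the one-element poset and closed under:
`P ∈ DP` whenever there is an atom `a` such that `P'' = P_{≥a} ∈ DP`
and `χ_{P''} ∣ χ_P`. -/
inductive IsDivisionalPoset :
    ∀ (β : Type) (po : PartialOrder β) (fin : Fintype β) (bo : OrderBot β), Prop where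
  | triv (β : Type) [po : PartialOrder β] [fin : Fintype β] [bo : OrderBot β]
      (h : ∀ x : β, x = ⊥) : IsDivisionalPoset β po fin bo
  | step (β : Type) [po : PartialOrder β] [fin : Fintype β] [bo : OrderBot β]
      (hLG : IsLocallyGeometric β) (a : β) (ha : a ∈ atoms β)
      (hres : IsDivisionalPoset {y : β // a ≤ y} inferInstance inferInstance inferInstance)
      (hdvd : charPoly {y : β // a ≤ y} ∣ charPoly β) :
      IsDivisionalPoset β po fin bo

/-- An element `m` of a (geometric) lattice is modular if
`m ∧ (y ∨ z) = (m ∧ y) ∨ z` for all `z ≤ m` and all `y`. Joins and meets are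
expressed via `joinSet` and `meetSet`. -/
def IsModular {β : Type*} [PartialOrder β] (m : β) : Prop :=
  ∀ z y j mj my r : β, z ≤ m →
    j ∈ joinSet {y, z} → mj ∈ meetSet {m, j} →
    my ∈ meetSet {m, y} → r ∈ joinSet {my, z} → mj = r

/-- `Q` is an M-ideal of the locally geometric poset `β`. -/
def IsMIdeal (β : Type*) [PartialOrder β] (Q : Set β) : Prop :=
  IsLowerSet Q ∧
  (∀ x y : β, Maximal (· ∈ Q) x → Maximal (· ∈ Q) y → rk x = rk y) ∧
  (∀ T ⊆ Q, joinSet T ⊆ Q) ∧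
  (∀ y ∈ Q, ∀ a ∈ atoms β, a ∉ Q → (joinSet {a, y}).Nonempty) ∧
  (∀ x : β, IsMax x → ∃ y, Maximal (· ∈ Q) y ∧
    ∃ h : y ≤ x, IsModular (⟨y, h⟩ : {u : β // u ≤ x}))

/-- `Q` is a TM-ideal of the locally geometric poset `β`: an M-ideal where
moreover `|a ∨ y| = 1` for `y ∈ Q` and atoms `a ∉ Q`. -/
def IsTMIdeal (β : Type*) [PartialOrder β] (Q : Set β) : Prop :=
  IsMIdeal β Q ∧ ∀ y ∈ Q, ∀ a ∈ atoms β, a ∉ Q → ∃! z, z ∈ joinSet {a, y}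

/-- A locally geometric poset is supersolvable if it admits an M-chain
`{0̂} = Q_0 ⊊ Q_1 ⊊ ⋯ ⊊ Q_r = P` with each `Q_i` an M-ideal of `Q_{i+1}`
and `rk(Q_i) = i`. -/
def IsSupersolvable (β : Type*) [PartialOrder β] [Fintype β] [OrderBot β] : Prop :=
  ∃ Q : Fin (prk β + 1) → Set β,
    Q 0 = {⊥} ∧ Q (Fin.last _) = Set.univ ∧
    (∀ i : Fin (prk β), Q i.castSucc ⊂ Q i.succ) ∧
    (∀ i : Fin (prk β + 1), prk {y : β // y ∈ Q i} = i) ∧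
    ∀ i : Fin (prk β),
      IsMIdeal {y : β // y ∈ Q i.succ} {z : {y : β // y ∈ Q i.succ} | (z : β) ∈ Q i.castSucc}

/-- A locally geometric poset is strictly supersolvable if it admits a
TM-chain as above, with each `Q_i` a TM-ideal of `Q_{i+1}`. -/
def IsStrictlySupersolvable (β : Type*) [PartialOrder β] [Fintype β] [OrderBot β] : Prop :=
  ∃ Q : Fin (prk β + 1) → Set β,
    Q 0 = {⊥} ∧ Q (Fin.last _) = Set.univ ∧
    (∀ i : Fin (prk β), Q i.castSucc ⊂ Q i.succ) ∧
    (∀ i : Fin (prk β + 1), prk {y : β // y ∈ Q i} = i) ∧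
    ∀ i : Fin (prk β),
      IsTMIdeal {y : β // y ∈ Q i.succ} {z : {y : β // y ∈ Q i.succ} | (z : β) ∈ Q i.castSucc}

end PosetArr

end

namespace PosetArr

section basic
variable {β : Type*} [PartialOrder β]

lemma chainHeight_ne_top [Fintype β] (s : Set β) : s.chainHeight (· < ·) ≠ ⊤ :=
  Set.chainHeight_ne_top_of_finite _ _ (Set.toFinite s)

lemma rk_cast [Fintype β] (x : β) : ((rk x : ℕ) : ℕ∞) = (Set.Iio x).chainHeight (· < ·) := by
  rw [rk, ENat.coe_toNat (chainHeight_ne_top _)]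

lemma rk_lt_rk [Fintype β] {x y : β} (h : x < y) : rk x < rk y := by
  have h1 : (Set.Iio x).chainHeight (· < ·) + 1 ≤ (insert x (Set.Iio x)).chainHeight (· < ·) := by
    obtain ⟨t, ht, hte, htc⟩ :=
      Set.exists_eq_chainHeight_of_finite (Set.Iio x) (· < ·) (Set.toFinite _)
    have hxt : x ∉ t := fun hx => lt_irrefl x (ht hx)
    rw [← hte, ← Set.encard_insert_of_notMem hxt]
    refine Set.encard_le_chainHeight_of_isChain _ _ (Set.insert_subset_insert ht) ?_
    exact htc.insert (fun b hb _ => Or.inr (ht hb))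
  have h2 : insert x (Set.Iio x) ⊆ Set.Iio y := by
    rintro z (rfl | hz)
    · exact h
    · exact lt_trans hz h
  have := (h1.trans (Set.chainHeight_mono _ _ _ h2) :
    (Set.Iio x).chainHeight (· < ·) + 1 ≤ (Set.Iio y).chainHeight (· < ·))
  have hx := rk_cast x
  have hy := rk_cast y
  rw [← hx, ← hy] at this
  have h3 : ((rk x : ℕ∞) + 1 : ℕ∞) ≤ (rk y : ℕ∞) := this
  have h4 : ((rk x + 1 : ℕ) : ℕ∞) ≤ (rk y : ℕ∞) := by push_cast; exact h3
  exact_mod_cast Nat.lt_of_succ_le (by exact_mod_cast h4)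

lemma rk_mono [Fintype β] {x y : β} (h : x ≤ y) : rk x ≤ rk y := by
  rcases eq_or_lt_of_le h with rfl | h
  · exact le_rfl
  · exact (rk_lt_rk h).le

lemma rk_bot [OrderBot β] : rk (⊥ : β) = 0 := by
  rw [rk]
  have : Set.Iio (⊥ : β) = ∅ := by
    ext z; simp [Set.mem_Iio]
  simp [this]

lemma rk_eq_one_iff [Fintype β] [OrderBot β] {b : β} :
    rk b = 1 ↔ Set.Iio b = {⊥} := by
  constructor
  · intro h
    have hb : b ≠ ⊥ := by
      rintro rfl; rw [rk_bot] at h; omega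
    ext z
    simp only [Set.mem_Iio, Set.mem_singleton_iff]
    constructor
    · intro hz
      by_contra hzb
      have h0 : (⊥ : β) < z := bot_lt_iff_ne_bot.mpr hzb
      have := rk_lt_rk h0
      have := rk_lt_rk hz
      rw [rk_bot] at *
      omega
    · rintro rfl; exact bot_lt_iff_ne_bot.mpr hb
  · intro h
    rw [rk, h]
    have : ({⊥} : Set β).chainHeight (· < ·) = 1 := by
      rw [← Set.encard_eq_chainHeight_of_isChain _ IsChain.singleton, Set.encard_singleton]
    simp [this]

/-- every non-bot element has an atom (rank-1 element) below it -/
lemma exists_atom_le [Fintype β] [OrderBot β] {x : β} (hx : x ≠ ⊥) :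
    ∃ b : β, rk b = 1 ∧ b ≤ x := by
  have hx' : (⊥ : β) < x := bot_lt_iff_ne_bot.mpr hx
  obtain ⟨b, hb, hmin⟩ := Finite.exists_le_minimal (p := fun z => ⊥ < z ∧ z ≤ x) ⟨hx', le_rfl⟩
  refine ⟨b, ?_, hmin.1.2⟩
  rw [rk_eq_one_iff]
  ext z
  simp only [Set.mem_Iio, Set.mem_singleton_iff]
  constructor
  · intro hz
    by_contra hzb
    have h0 : (⊥ : β) < z := bot_lt_iff_ne_bot.mpr hzb
    have := hmin.2 ⟨h0, hz.le.trans hmin.1.2⟩ hz.le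
    exact absurd (le_antisymm this hz.le) hz.ne'
  · rintro rfl; exact hmin.1.1

end basic

section moblemmas
variable {β : Type*} [PartialOrder β] [Fintype β] [OrderBot β]

lemma mob_bot_sum (x : β) :
    ∑ y ∈ Finset.univ.filter (fun y : β => y ≤ x), mob (⊥ : β) y
      = if x = ⊥ then 1 else 0 := by
  rcases eq_or_ne x ⊥ with rfl | hx
  · rw [if_pos rfl]
    have : Finset.univ.filter (fun y : β => y ≤ (⊥ : β)) = {⊥} := by
      ext z; simp [le_bot_iff]
    rw [this, Finset.sum_singleton, mob]
    simp
  · rw [if_neg hx]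
    have hsplit : Finset.univ.filter (fun y : β => y ≤ x)
        = insert x (Finset.univ.filter (fun y : β => y < x)) := by
      ext z
      simp only [Finset.mem_filter, Finset.mem_univ, true_and, Finset.mem_insert]
      constructor
      · intro h; rcases eq_or_lt_of_le h with h | h
        · exact Or.inl h
        · exact Or.inr h
      · rintro (rfl | h); exacts [le_rfl, h.le]
    rw [hsplit, Finset.sum_insert (by simp)]
    have hmx : mob (⊥ : β) x =
        - ∑ c ∈ (Finset.univ.filter (fun c : β => ⊥ ≤ c ∧ c < x)).attach, mob (⊥:β) c.1 := by
      rw [mob, if_neg (by exact fun h => hx h.symm), if_pos (bot_lt_iff_ne_bot.mpr hx)]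
    rw [hmx, Finset.sum_attach _ (fun c => mob (⊥:β) c)]
    have : Finset.univ.filter (fun c : β => ⊥ ≤ c ∧ c < x)
        = Finset.univ.filter (fun y : β => y < x) := by
      ext z; simp
    rw [this]
    ring

lemma mob_unique (g : β → ℤ)
    (hg : ∀ x : β, ∑ y ∈ Finset.univ.filter (fun y : β => y ≤ x), g y
      = if x = ⊥ then 1 else 0) :
    ∀ x : β, g x = mob (⊥ : β) x := by
  intro x
  induction x using WellFoundedLT.induction with
  | _ x ih =>
    have h1 := hg x
    have h2 := mob_bot_sum x
    have hsplit : ∀ f : β → ℤ, ∑ y ∈ Finset.univ.filter (fun y : β => y ≤ x), f y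
        = f x + ∑ y ∈ Finset.univ.filter (fun y : β => y < x), f y := by
      intro f
      have : Finset.univ.filter (fun y : β => y ≤ x)
          = insert x (Finset.univ.filter (fun y : β => y < x)) := by
        ext z
        simp only [Finset.mem_filter, Finset.mem_univ, true_and, Finset.mem_insert]
        constructor
        · intro h; rcases eq_or_lt_of_le h with h | h
          · exact Or.inl h
          · exact Or.inr h
        · rintro (rfl | h); exacts [le_rfl, h.le]
      rw [this, Finset.sum_insert (by simp)]
    rw [hsplit] at h1 h2
    have : ∑ y ∈ Finset.univ.filter (fun y : β => y < x), g y
        = ∑ y ∈ Finset.univ.filter (fun y : β => y < x), mob (⊥:β) y :=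
      Finset.sum_congr rfl (fun y hy => ih y (by simpa using hy))
    omega

end moblemmas

section joins
variable {γ : Type*} [PartialOrder γ]

lemma minimal_upperBound_mem_joinSet [Finite γ] {S : Set γ} {w : γ}
    (hw : w ∈ upperBounds S) : ∃ j, j ≤ w ∧ j ∈ joinSet S := by
  obtain ⟨m, hm, hmin⟩ := Finite.exists_le_minimal (p := (· ∈ upperBounds S)) hw
  exact ⟨m, hm, hmin.1, fun u hu hum => le_antisymm hum (hmin.2 hu hum)⟩

lemma pair_least [Finite γ] (hL : IsLatticePoset γ) (x y : γ) :
    ∃ j, IsLeast (upperBounds {x, y}) j := by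
  obtain ⟨z, hz, huniq⟩ := (hL x y).1
  refine ⟨z, hz.1, fun w hw => ?_⟩
  obtain ⟨m, hm, hmem⟩ := minimal_upperBound_mem_joinSet hw
  rw [huniq m hmem] at hm
  exact hm

lemma finset_least [Finite γ] [OrderBot γ] (hL : IsLatticePoset γ) (T : Finset γ) :
    ∃ j, IsLeast (upperBounds (T : Set γ)) j := by
  classical
  induction T using Finset.induction_on with
  | empty =>
    exact ⟨⊥, fun s hs => absurd hs (by simp), fun w _ => bot_le⟩
  | @insert a S ha ih =>
    obtain ⟨u, hu⟩ := ih
    obtain ⟨v, hv⟩ := pair_least hL a u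
    refine ⟨v, ?_, ?_⟩
    · intro s hs
      rcases Finset.mem_insert.mp (by exact_mod_cast hs) with rfl | hs
      · exact hv.1 (Set.mem_insert _ _)
      · exact le_trans (hu.1 hs) (hv.1 (Set.mem_insert_of_mem _ rfl))
    · intro w hw
      have h1 : a ≤ w := hw (by simp)
      have h2 : u ≤ w := hu.2 (fun s hs => hw (by
        simp only [Finset.coe_insert, Set.mem_insert_iff]
        exact Or.inr hs))
      refine hv.2 ?_
      rintro s (rfl | rfl) <;> assumption

lemma set_least [Fintype γ] [OrderBot γ] (hL : IsLatticePoset γ) (S : Set γ) :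
    ∃ j, IsLeast (upperBounds S) j := by
  obtain ⟨j, hj⟩ := finset_least hL S.toFinset
  rw [Set.coe_toFinset] at hj
  exact ⟨j, hj⟩

lemma isLeast_mem_joinSet {S : Set γ} {j : γ} (h : IsLeast (upperBounds S) j) :
    j ∈ joinSet S :=
  ⟨h.1, fun w hw hwj => le_antisymm hwj (h.2 hw)⟩

end joins

section locgeom
variable {β : Type} [PartialOrder β] [Fintype β] [OrderBot β]

/-- master join lemma: for `S ⊆ Iic x` there is a join of `S` below `x`,
least among upper bounds below `x`. -/
lemma exists_join_le (hLG : IsLocallyGeometric β) (x : β) (S : Set β)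
    (hS : S ⊆ Set.Iic x) :
    ∃ j, j ∈ joinSet S ∧ j ≤ x ∧ ∀ w ∈ upperBounds S, w ≤ x → j ≤ w := by
  set L := {y : β // y ≤ x}
  have hL : IsLatticePoset L := (hLG.2 x).1
  letI : OrderBot L := { bot := ⟨⊥, bot_le⟩, bot_le := fun y => bot_le }
  set S' : Set L := {z : L | (z : β) ∈ S} with hS'
  obtain ⟨j, hj⟩ := set_least hL S'
  have hub : ∀ w : L, w ∈ upperBounds S' ↔ (w : β) ∈ upperBounds S := by
    intro w
    constructor
    · intro hw s hs
      exact hw (show (⟨s, hS hs⟩ : L) ∈ S' from hs)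
    · intro hw s hs
      exact hw hs
  refine ⟨(j : β), ?_, j.2, ?_⟩
  · constructor
    · exact (hub j).mp hj.1
    · intro w hw hwj
      have hwx : w ≤ x := hwj.trans j.2
      have : j ≤ (⟨w, hwx⟩ : L) := hj.2 ((hub _).mpr hw)
      exact le_antisymm hwj this
  · intro w hw hwx
    exact hj.2 ((hub (⟨w, hwx⟩ : L)).mpr hw)

lemma join_le_unique (hLG : IsLocallyGeometric β) {x : β} {S : Set β}
    {j j' : β} (hS : S ⊆ Set.Iic x) (hj : j ∈ joinSet S) (hjx : j ≤ x)
    (hj' : j' ∈ joinSet S) (hj'x : j' ≤ x) : j = j' := by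
  obtain ⟨j0, hj0, hj0x, hleast⟩ := exists_join_le hLG x S hS
  have h1 : j0 = j := hj.2 j0 hj0.1 (hleast j hj.1 hjx)
  have h2 : j0 = j' := hj'.2 j0 hj0.1 (hleast j' hj'.1 hj'x)
  rw [← h1, h2]

lemma not_le_of_joinSet {x : β} {S : Set β} {j : β} (hj : j ∈ joinSet S)
    (hjx : j ≤ x) : S ⊆ Set.Iic x :=
  fun s hs => (hj.1 hs).trans hjx

/-- the filter-count used in cross-cut computations -/
lemma count_join_le (hLG : IsLocallyGeometric β) (x : β) (S : Set β) :
    (Finset.univ.filter (fun z : β => z ≤ x ∧ z ∈ joinSet S)).card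
      = if S ⊆ Set.Iic x then 1 else 0 := by
  split_ifs with h
  · obtain ⟨j, hj, hjx, _⟩ := exists_join_le hLG x S h
    rw [Finset.card_eq_one]
    refine ⟨j, ?_⟩
    ext z
    simp only [Finset.mem_filter, Finset.mem_univ, true_and, Finset.mem_singleton]
    constructor
    · rintro ⟨hzx, hz⟩
      exact join_le_unique hLG h hz hzx hj hjx
    · rintro rfl
      exact ⟨hjx, hj⟩
  · rw [Finset.card_eq_zero]
    ext z
    simp only [Finset.mem_filter, Finset.mem_univ, true_and, Finset.notMem_empty,
      iff_false, not_and]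
    intro hzx hz
    exact h (not_le_of_joinSet hz hzx)

end locgeom


section transfer
variable {β : Type} [PartialOrder β] [Fintype β] [OrderBot β]

lemma chainHeight_val_image {Q : β → Prop} (s : Set {w : β // Q w}) :
    (Subtype.val '' s).chainHeight (· < ·) = s.chainHeight (· < ·) :=
  Set.chainHeight_eq_of_relEmbedding s (Subtype.relEmbedding (· < ·) Q)

lemma rk_Iic (x : β) (z : {y : β // y ≤ x}) : rk z = rk (z : β) := by
  have himg : (Subtype.val '' (Set.Iio z) : Set β) = Set.Iio (z : β) := by
    ext w
    simp only [Set.mem_image, Set.mem_Iio]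
    constructor
    · rintro ⟨u, hu, rfl⟩
      exact hu
    · intro hw
      exact ⟨⟨w, hw.le.trans z.2⟩, hw, rfl⟩
  have := chainHeight_val_image (Q := fun y => y ≤ x) (Set.Iio z)
  rw [himg] at this
  rw [rk, rk, ← this]

lemma atoms_Iic (x : β) (z : {y : β // y ≤ x}) :
    z ∈ atoms {y : β // y ≤ x} ↔ (z : β) ∈ atoms β := by
  simp only [atoms, Set.mem_setOf_eq, rk_Iic]

lemma covBy_Iic {x : β} {z y : {u : β // u ≤ x}} (h : z ⋖ y) : (z : β) ⋖ (y : β) := by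
  refine ⟨Subtype.coe_lt_coe.mpr h.1, fun w hzw hwy => ?_⟩
  have hwx : w ≤ x := hwy.le.trans y.2
  exact h.2 (show z < (⟨w, hwx⟩ : {u : β // u ≤ x}) from hzw)
    (show (⟨w, hwx⟩ : {u : β // u ≤ x}) < y from hwy)

lemma joinSet_Iic_of_mem {x : β} {S : Set β} (hS : S ⊆ Set.Iic x) {y : {u : β // u ≤ x}}
    (hy : (y : β) ∈ joinSet S) :
    y ∈ joinSet {z : {u : β // u ≤ x} | (z : β) ∈ S} := by
  constructor
  · intro s hs
    exact Subtype.coe_le_coe.mp (hy.1 hs)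
  · intro w hw hwy
    have : (w : β) ∈ upperBounds S := by
      intro s hs
      exact (hw (show (⟨s, hS hs⟩ : {u : β // u ≤ x}) ∈ _ from hs) : _)
    exact Subtype.ext (hy.2 w this hwy)

lemma coverStep (hLG : IsLocallyGeometric β) {x z t : β} (hz : z ≤ x) (ht : t ≤ x)
    (hat : t ∈ atoms β) (hnt : ¬ t ≤ z) :
    ∃ y, y ≤ x ∧ y ∈ joinSet {z, t} ∧ z ⋖ y ∧ rk y = rk z + 1 := by
  have hpair : ({z, t} : Set β) ⊆ Set.Iic x := by
    rintro s (rfl | rfl) <;> assumption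
  obtain ⟨y, hy, hyx, -⟩ := exists_join_le hLG x {z, t} hpair
  have hy' := joinSet_Iic_of_mem hpair (y := ⟨y, hyx⟩) hy
  have hset : {w : {u : β // u ≤ x} | (w : β) ∈ ({z, t} : Set β)}
      = {(⟨z, hz⟩ : {u : β // u ≤ x}), ⟨t, ht⟩} := by
    ext w
    simp only [Set.mem_setOf_eq, Set.mem_insert_iff, Set.mem_singleton_iff]
    constructor
    · rintro (h | h)
      · exact Or.inl (Subtype.ext h)
      · exact Or.inr (Subtype.ext h)
    · rintro (rfl | rfl)
      · exact Or.inl rfl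
      · exact Or.inr rfl
  rw [hset] at hy'
  have hcov : (⟨z, hz⟩ : {u : β // u ≤ x}) ⋖ ⟨y, hyx⟩ := by
    rw [(hLG.2 x).2]
    refine ⟨⟨t, ht⟩, (atoms_Iic x _).mpr hat, ?_, hy'⟩
    intro hle
    exact hnt (Subtype.coe_le_coe.mpr hle)
  have hcovβ : z ⋖ y := covBy_Iic hcov
  exact ⟨y, hyx, hy, hcovβ, hLG.1 z y hcovβ⟩

lemma rel_atomistic (hLG : IsLocallyGeometric β) {x z : β} (hz : z ≤ x)
    (h : ∀ b ∈ atoms β, b ≤ x → b ≤ z) : z = x := by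
  by_contra hne
  have hzx : z < x := lt_of_le_of_ne hz hne
  obtain ⟨w, hw, hwmax⟩ := Finite.exists_le_maximal (p := fun w => z ≤ w ∧ w < x) ⟨le_rfl, hzx⟩
  have hcov : (⟨w, hwmax.1.2.le⟩ : {u : β // u ≤ x}) ⋖ ⟨x, le_rfl⟩ := by
    refine ⟨hwmax.1.2, fun u hu hux => ?_⟩
    have h1 : z ≤ (u : β) := hwmax.1.1.trans hu.le
    have h2 : (u : β) < x := hux
    have := hwmax.2 ⟨h1, h2⟩ hu.le
    have hu' : w < (u : β) := Subtype.coe_lt_coe.mpr hu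
    exact hu'.not_ge this
  obtain ⟨b, hb, hbw, -⟩ := ((hLG.2 x).2 _ _).mp hcov
  have hbx : (b : β) ≤ x := b.2
  have : (b : β) ≤ z := h b ((atoms_Iic x b).mp hb) hbx
  exact hbw (Subtype.coe_le_coe.mp (this.trans hwmax.1.1))

lemma exists_atom_ne_le (hLG : IsLocallyGeometric β) {a y : β} (hay : a < y) :
    ∃ b ∈ atoms β, b ≠ a ∧ b ≤ y := by
  obtain ⟨w, hw, hwmax⟩ := Finite.exists_le_maximal (p := fun w => a ≤ w ∧ w < y)
    ⟨le_rfl, hay⟩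
  have hcov : (⟨w, hwmax.1.2.le⟩ : {u : β // u ≤ y}) ⋖ ⟨y, le_rfl⟩ := by
    refine ⟨hwmax.1.2, fun u hu huy => ?_⟩
    have := hwmax.2 ⟨hwmax.1.1.trans hu.le, huy⟩ hu.le
    have hu' : w < (u : β) := Subtype.coe_lt_coe.mpr hu
    exact hu'.not_ge this
  obtain ⟨b, hb, hbw, -⟩ := ((hLG.2 y).2 _ _).mp hcov
  refine ⟨(b : β), (atoms_Iic y b).mp hb, ?_, b.2⟩
  rintro rfl
  exact hbw (Subtype.coe_le_coe.mp hwmax.1.1)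

lemma joinSet_empty : joinSet (∅ : Set β) = {⊥} := by
  ext z
  simp only [joinSet, upperBounds_empty, Set.mem_setOf_eq, Set.mem_univ, true_and,
    Set.mem_singleton_iff]
  constructor
  · intro h
    exact (h ⊥ trivial bot_le).symm
  · rintro rfl
    exact fun w _ hw => le_antisymm hw bot_le

lemma join_insert (hLG : IsLocallyGeometric β) {x z t y : β} {T : Set β}
    (hzT : z ∈ joinSet T) (hzx : z ≤ x) (hy : y ∈ joinSet {z, t}) (hyx : y ≤ x) :
    y ∈ joinSet (insert t T) := by
  have hT : T ⊆ Set.Iic x := fun s hs => (hzT.1 hs).trans hzx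
  have hty : t ≤ y := hy.1 (Set.mem_insert_of_mem _ rfl)
  have hzy : z ≤ y := hy.1 (Set.mem_insert _ _)
  constructor
  · rintro s (rfl | hs)
    · exact hty
    · exact (hzT.1 hs).trans hzy
  · intro w hw hwy
    have hTw : T ⊆ Set.Iic w := fun s hs => hw (Set.mem_insert_of_mem _ hs)
    obtain ⟨j, hj, hjw, -⟩ := exists_join_le hLG w T hTw
    have hjx : j ≤ x := hjw.trans (hwy.trans hyx)
    have : j = z := join_le_unique hLG hT hj hjx hzT hzx
    have hzw : z ≤ w := this ▸ hjw
    have htw : t ≤ w := hw (Set.mem_insert _ _)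
    refine hy.2 w ?_ hwy
    rintro s (rfl | rfl) <;> assumption

end transfer


section climb
variable {β : Type} [PartialOrder β] [Fintype β] [OrderBot β]

lemma mem_genSub_iff {B : Set β} {z : β} :
    z ∈ genSub B ↔ ∃ T ⊆ B, z ∈ joinSet T := by
  constructor
  · rintro (rfl | h)
    · exact ⟨∅, Set.empty_subset _, by rw [joinSet_empty]; rfl⟩
    · exact h
  · intro h
    exact Set.mem_insert_of_mem _ h

lemma rk_le_prk (x : β) : rk x ≤ prk β :=
  Finset.le_sup (Finset.mem_univ x)

lemma climb (hLG : IsLocallyGeometric β) (x : β) (Q : β → Prop)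
    (hstep : ∀ z, Q z → z ≤ x → z ≠ x →
      ∃ t ∈ atoms β, t ≤ x ∧ ¬ t ≤ z ∧ ∀ y, y ∈ joinSet {z, t} → y ≤ x → Q y) :
    ∀ n z, Q z → z ≤ x → rk x - rk z ≤ n →
      ∃ l : List β, l.Chain' (· < ·) ∧ (∀ w ∈ l, Q w ∧ z ≤ w ∧ w < x) ∧
        l.length = rk x - rk z := by
  intro n
  induction n with
  | zero =>
    intro z hQ hzx hn
    rcases eq_or_ne z x with rfl | hne
    · exact ⟨[], List.isChain_nil, by simp, by simp⟩
    · have : rk z < rk x := rk_lt_rk (lt_of_le_of_ne hzx hne)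
      omega
  | succ n ih =>
    intro z hQ hzx hn
    rcases eq_or_ne z x with rfl | hne
    · exact ⟨[], List.isChain_nil, by simp, by simp⟩
    obtain ⟨t, hat, htx, htz, hQ'⟩ := hstep z hQ hzx hne
    obtain ⟨y, hyx, hyj, hcov, hrk⟩ := coverStep hLG hzx htx hat htz
    have hrkzx : rk z < rk x := rk_lt_rk (lt_of_le_of_ne hzx hne)
    have hQy : Q y := hQ' y hyj hyx
    obtain ⟨l', hc', hmem', hlen'⟩ := ih y hQy hyx (by omega)
    refine ⟨z :: l', ?_, ?_, ?_⟩
    · refine List.isChain_cons.mpr ?_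
      refine ⟨fun w hw => ?_, hc'⟩
      have hwl : w ∈ l' := List.mem_of_mem_head? hw
      have := (hmem' w hwl).2.1
      exact lt_of_lt_of_le hcov.1 this
    · intro w hw
      rcases List.mem_cons.mp hw with rfl | hw
      · exact ⟨hQ, le_rfl, lt_of_le_of_ne hzx hne⟩
      · obtain ⟨h1, h2, h3⟩ := hmem' w hw
        exact ⟨h1, hcov.1.le.trans h2, h3⟩
    · simp only [List.length_cons, hlen']
      omega

/-- upper bound on chain length via rank (monotone strictly into an interval) -/
lemma subchain_length_le {S : Set β} {lo hi : ℕ}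
    (hS : ∀ w ∈ S, lo ≤ rk w ∧ rk w ≤ hi) :
    S.chainHeight (· < ·) ≤ (hi + 1 - lo : ℕ) := by
  obtain ⟨t, ht, hte, htc⟩ := Set.exists_eq_chainHeight_of_finite S (· < ·) (Set.toFinite _)
  rw [← hte]
  have hinj : Set.InjOn rk t := by
    intro u hu v hv huv
    by_contra hne
    rcases htc hu hv hne with h | h
    · exact absurd huv (rk_lt_rk h).ne
    · exact absurd huv (rk_lt_rk h).ne'
  rw [← hinj.encard_image]
  have hsub : rk '' t ⊆ ((Finset.Icc lo hi : Finset ℕ) : Set ℕ) := by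
    rintro m ⟨w, hw, rfl⟩
    exact Finset.mem_coe.mpr (Finset.mem_Icc.mpr (hS w (ht hw)))
  calc (rk '' t).encard ≤ ((Finset.Icc lo hi : Finset ℕ) : Set ℕ).encard :=
        Set.encard_le_encard hsub
    _ = _ := by rw [Set.encard_coe_eq_coe_finsetCard, Nat.card_Icc]

lemma le_chainHeight_of_list {S : Set β} (l : List β) (hc : l.IsChain (· < ·))
    (hS : ∀ w ∈ l, w ∈ S) (n : ℕ) (hn : l.length = n) :
    (n : ℕ∞) ≤ S.chainHeight (· < ·) := by
  have hpw := List.isChain_iff_pairwise.mp hc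
  have hnd : l.Nodup := hpw.nodup
  have key : ∀ l : List β, l.Pairwise (· < ·) →
      ∀ u ∈ l, ∀ v ∈ l, u ≠ v → u < v ∨ v < u := by
    intro l hl
    induction l with
    | nil => simp
    | cons a l ih =>
      rw [List.pairwise_cons] at hl
      intro u hu v hv hne
      rcases List.mem_cons.mp hu with rfl | hu <;> rcases List.mem_cons.mp hv with rfl | hv
      · exact absurd rfl hne
      · exact Or.inl (hl.1 v hv)
      · exact Or.inr (hl.1 u ‹u ∈ l›)
      · exact ih hl.2 u hu v hv hne
  have hset : ({w | w ∈ l} : Set β) = ((l.toFinset : Finset β) : Set β) := by ext; simp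
  have henc : ({w | w ∈ l} : Set β).encard = n := by
    rw [hset, Set.encard_coe_eq_coe_finsetCard, List.toFinset_card_of_nodup hnd, hn]
  rw [← henc]
  exact Set.encard_le_chainHeight_of_isChain _ _ (fun w hw => hS w hw)
    (fun u hu v hv hne => key l hpw u hu v hv hne)

lemma chainHeight_Iio_subtype {Q : β → Prop} (x : {w : β // Q w}) :
    (Set.Iio x).chainHeight (· < ·) = ({w : β | Q w ∧ w < (x : β)}).chainHeight (· < ·) := by
  have himg : (Subtype.val '' (Set.Iio x) : Set β) = {w : β | Q w ∧ w < (x : β)} := by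
    ext w
    simp only [Set.mem_image, Set.mem_Iio, Set.mem_setOf_eq]
    constructor
    · rintro ⟨u, hu, rfl⟩
      exact ⟨u.2, hu⟩
    · rintro ⟨h1, h2⟩
      exact ⟨⟨w, h1⟩, h2, rfl⟩
  rw [← himg, chainHeight_val_image]

lemma rk_Ici (hLG : IsLocallyGeometric β) {a : β} (ha : a ∈ atoms β) (y : {w : β // a ≤ w}) :
    rk y = rk (y : β) - 1 := by
  have hkey := chainHeight_Iio_subtype (Q := fun w => a ≤ w) y
  have hle : (Set.Iio y).chainHeight (· < ·) ≤ ((rk (y : β) - 1 : ℕ) : ℕ∞) := by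
    rw [hkey]
    refine subchain_length_le (lo := 1) (hi := rk (y : β) - 1) ?_
    rintro w ⟨haw, hwy⟩
    have h1 : 1 ≤ rk w := by
      have := rk_mono haw
      rw [ha] at this
      omega
    have h2 := rk_lt_rk hwy
    exact ⟨h1, by omega⟩
  have hge : ((rk (y : β) - 1 : ℕ) : ℕ∞) ≤ (Set.Iio y).chainHeight (· < ·) := by
    rw [hkey]
    rcases eq_or_ne (a : β) (y : β) with heq | hne
    · have h1 : rk (y : β) = 1 := by rw [← heq]; exact ha
      simp [h1]
    · have hay : a < (y : β) := lt_of_le_of_ne y.2 hne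
      obtain ⟨l, hc, hmem, hlen⟩ := climb hLG (y : β) (fun z => a ≤ z)
        (fun z hQ hzy hzney => by
          have hnot : ¬ ∀ b ∈ atoms β, b ≤ (y : β) → b ≤ z :=
            fun hall => hzney (rel_atomistic hLG hzy hall)
          push_neg at hnot
          obtain ⟨t, hat, hty, htz⟩ := hnot
          exact ⟨t, hat, hty, htz,
            fun y' hy' _ => hQ.trans (hy'.1 (Set.mem_insert _ _))⟩)
        (rk (y : β)) a le_rfl y.2 (Nat.sub_le _ _)
      refine le_chainHeight_of_list l hc (fun w hw => ?_) _ ?_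
      · obtain ⟨h1, h2, h3⟩ := hmem w hw
        exact ⟨h1, h3⟩
      · rw [hlen]
        have : rk a = 1 := ha
        omega
  have := le_antisymm hle hge
  rw [rk]
  rw [this, ENat.toNat_coe]

lemma rk_genSub (hLG : IsLocallyGeometric β) {B : Set β} (hB : B ⊆ atoms β)
    (x : {w : β // w ∈ genSub B}) :
    rk x = rk (x : β) := by
  have hkey := chainHeight_Iio_subtype (Q := fun w => w ∈ genSub B) x
  have hle : (Set.Iio x).chainHeight (· < ·) ≤ ((rk (x : β) : ℕ) : ℕ∞) := by
    rw [hkey, rk_cast]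
    exact Set.chainHeight_mono _ _ _ (fun w hw => hw.2)
  have hge : ((rk (x : β) : ℕ) : ℕ∞) ≤ (Set.Iio x).chainHeight (· < ·) := by
    rw [hkey]
    obtain ⟨T, hTB, hxT⟩ := mem_genSub_iff.mp x.2
    obtain ⟨l, hc, hmem, hlen⟩ := climb hLG (x : β) (fun z => z ∈ genSub B)
      (fun z hQ hzx hznex => by
        have hstep' : ∃ t ∈ T, ¬ t ≤ z := by
          by_contra hcon
          push_neg at hcon
          exact hznex (hxT.2 z (fun s hs => hcon s hs) hzx)
        obtain ⟨t, htT, htz⟩ := hstep'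
        refine ⟨t, hB (hTB htT), hxT.1 htT, htz, fun y hy hyx => ?_⟩
        obtain ⟨T', hT'B, hzT'⟩ := mem_genSub_iff.mp hQ
        exact mem_genSub_iff.mpr ⟨insert t T', Set.insert_subset (hTB htT) hT'B,
          join_insert hLG hzT' hzx hy hyx⟩)
      (rk (x : β)) ⊥ (Set.mem_insert _ _) bot_le (Nat.sub_le _ _)
    refine le_chainHeight_of_list l hc (fun w hw => ?_) _ ?_
    · obtain ⟨h1, h2, h3⟩ := hmem w hw
      exact ⟨h1, h3⟩
    · rw [hlen, rk_bot]
      omega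
  have := le_antisymm hle hge
  conv_lhs => rw [rk]
  rw [this, ENat.toNat_coe]

end climb


section crosscut
variable {β : Type} [PartialOrder β] [Fintype β] [OrderBot β]

lemma sum_subtype_le {Q : β → Prop} (x : {w : β // Q w}) (f : β → ℤ) :
    ∑ z ∈ Finset.univ.filter (fun z : {w : β // Q w} => z ≤ x), f (z : β)
      = ∑ z ∈ Finset.univ.filter (fun z : β => Q z ∧ z ≤ (x : β)), f z := by
  refine Finset.sum_bij (fun z _ => (z : β)) ?_ ?_ ?_ ?_
  · intro z hz
    simp only [Finset.mem_filter, Finset.mem_univ, true_and] at hz ⊢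
    exact ⟨z.2, hz⟩
  · intro z1 _ z2 _ h
    exact Subtype.ext h
  · intro z hz
    simp only [Finset.mem_filter, Finset.mem_univ, true_and] at hz
    exact ⟨⟨z, hz.1⟩, by simp only [Finset.mem_filter, Finset.mem_univ, true_and]; exact hz.2, rfl⟩
  · intro z _
    rfl

lemma crosscut_sum (hLG : IsLocallyGeometric β) (BF : Finset β) (F : Finset β → Set β)
    (x : β) (hJ : ∀ S ∈ BF.powerset, (F S ⊆ Set.Iic x ↔ ∀ b ∈ S, b ≤ x)) :
    ∑ S ∈ BF.powerset, (-1 : ℤ)^S.card *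
        ((Finset.univ.filter (fun z : β => z ≤ x ∧ z ∈ joinSet (F S))).card : ℤ)
      = if BF.filter (fun b => b ≤ x) = ∅ then 1 else 0 := by
  have step1 : ∀ S ∈ BF.powerset, (-1 : ℤ)^S.card *
        ((Finset.univ.filter (fun z : β => z ≤ x ∧ z ∈ joinSet (F S))).card : ℤ)
      = if S ⊆ BF.filter (fun b => b ≤ x) then (-1 : ℤ)^S.card else 0 := by
    intro S hS
    rw [count_join_le hLG x (F S)]
    have hcond : F S ⊆ Set.Iic x ↔ S ⊆ BF.filter (fun b => b ≤ x) := by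
      rw [hJ S hS]
      constructor
      · intro h b hb
        exact Finset.mem_filter.mpr ⟨Finset.mem_powerset.mp hS hb, h b hb⟩
      · intro h b hb
        exact (Finset.mem_filter.mp (h hb)).2
    split_ifs with h1 h2 h2 <;> simp_all
  rw [Finset.sum_congr rfl step1]
  rw [Finset.sum_ite, Finset.sum_const_zero, add_zero]
  have hps : (BF.powerset.filter (fun S => S ⊆ BF.filter (fun b => b ≤ x)))
      = (BF.filter (fun b => b ≤ x)).powerset := by
    ext S
    simp only [Finset.mem_filter, Finset.mem_powerset]
    constructor
    · rintro ⟨-, h⟩; exact h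
    · intro h
      exact ⟨h.trans (Finset.filter_subset _ _), h⟩
  rw [hps, Finset.sum_powerset_neg_one_pow_card]

/-- cross-cut theorem for `β` itself -/
lemma mob_crosscut (hLG : IsLocallyGeometric β) (AF : Finset β)
    (hAF : ∀ b, b ∈ AF ↔ b ∈ atoms β) (x : β) :
    mob (⊥ : β) x = ∑ S ∈ AF.powerset, (-1 : ℤ)^S.card *
      (if x ∈ joinSet (S : Set β) then 1 else 0) := by
  refine (mob_unique (fun z => ∑ S ∈ AF.powerset, (-1 : ℤ)^S.card *
      (if z ∈ joinSet (S : Set β) then 1 else 0)) ?_ x).symm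
  intro x
  rw [Finset.sum_comm]
  have inner : ∀ S ∈ AF.powerset,
      ∑ z ∈ Finset.univ.filter (fun z : β => z ≤ x), (-1 : ℤ)^S.card *
        (if z ∈ joinSet (S : Set β) then 1 else 0)
      = (-1 : ℤ)^S.card *
        ((Finset.univ.filter (fun z : β => z ≤ x ∧ z ∈ joinSet (S : Set β))).card : ℤ) := by
    intro S _
    rw [← Finset.mul_sum]
    congr 1
    rw [Finset.sum_boole, Finset.filter_filter]
  rw [Finset.sum_congr rfl inner, crosscut_sum hLG AF _ x (fun S _ => by
    simp [Set.subset_def])]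
  refine if_congr ?_ rfl rfl
  constructor
  · intro h
    by_contra hx
    obtain ⟨b, hb, hbx⟩ := exists_atom_le (β := β) hx
    have : b ∈ AF.filter (fun b => b ≤ x) :=
      Finset.mem_filter.mpr ⟨(hAF b).mpr hb, hbx⟩
    simp [h] at this
  · rintro rfl
    rw [Finset.filter_eq_empty_iff]
    intro b hb
    have hatom : rk b = 1 := (hAF b).mp hb
    intro hbbot
    have : b = ⊥ := le_bot_iff.mp hbbot
    rw [this, rk_bot] at hatom
    omega

/-- cross-cut engine for subtype posets -/
lemma mob_crosscut_subtype {Q : β → Prop} [bo' : OrderBot {w : β // Q w}]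
    (hLG : IsLocallyGeometric β) (BF : Finset β) (F : Finset β → Set β)
    (hQ : ∀ S ∈ BF.powerset, ∀ z : β, z ∈ joinSet (F S) → Q z)
    (hJ : ∀ (x : {w : β // Q w}), ∀ S ∈ BF.powerset,
      (F S ⊆ Set.Iic (x : β) ↔ ∀ b ∈ S, b ≤ (x : β)))
    (hbase : ∀ x : {w : β // Q w},
      ((BF.filter (fun b => b ≤ (x : β))) = ∅ ↔ x = ⊥))
    (x : {w : β // Q w}) :
    mob (⊥ : {w : β // Q w}) x = ∑ S ∈ BF.powerset, (-1 : ℤ)^S.card *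
      (if (x : β) ∈ joinSet (F S) then 1 else 0) := by
  refine (mob_unique (fun z : {w : β // Q w} => ∑ S ∈ BF.powerset, (-1 : ℤ)^S.card *
      (if (z : β) ∈ joinSet (F S) then 1 else 0)) ?_ x).symm
  intro x
  rw [sum_subtype_le x (fun z => ∑ S ∈ BF.powerset, (-1 : ℤ)^S.card *
      (if z ∈ joinSet (F S) then 1 else 0))]
  rw [Finset.sum_comm]
  have inner : ∀ S ∈ BF.powerset,
      ∑ z ∈ Finset.univ.filter (fun z : β => Q z ∧ z ≤ (x : β)), (-1 : ℤ)^S.card *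
        (if z ∈ joinSet (F S) then 1 else 0)
      = (-1 : ℤ)^S.card *
        ((Finset.univ.filter (fun z : β => z ≤ (x : β) ∧ z ∈ joinSet (F S))).card : ℤ) := by
    intro S hS
    rw [← Finset.mul_sum]
    congr 1
    rw [Finset.sum_boole, Finset.filter_filter]
    have hfil : Finset.univ.filter (fun z : β => (Q z ∧ z ≤ (x : β)) ∧ z ∈ joinSet (F S))
        = Finset.univ.filter (fun z : β => z ≤ (x : β) ∧ z ∈ joinSet (F S)) := by
      ext z
      simp only [Finset.mem_filter, Finset.mem_univ, true_and]
      constructor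
      · rintro ⟨⟨-, h1⟩, h2⟩
        exact ⟨h1, h2⟩
      · rintro ⟨h1, h2⟩
        exact ⟨⟨hQ S hS z h2, h1⟩, h2⟩
    rw [hfil]
  rw [Finset.sum_congr rfl inner, crosscut_sum hLG BF F (x : β) (hJ x)]
  rw [if_congr (hbase x) rfl rfl]
  convert rfl

end crosscut


section decomp
variable {β : Type} [PartialOrder β] [Fintype β] [OrderBot β]

lemma atoms_diff_subset (a : β) : atoms β \ {a} ⊆ atoms β := Set.diff_subset

lemma mob_genSub (hLG : IsLocallyGeometric β) {a : β} (ha : a ∈ atoms β)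
    (x : {w : β // w ∈ genSub (atoms β \ {a})}) :
    mob ⊥ x = ∑ S ∈ ((Finset.univ.filter (· ∈ atoms β)).erase a).powerset,
      (-1 : ℤ)^S.card * (if (x : β) ∈ joinSet (S : Set β) then 1 else 0) := by
  set BF := (Finset.univ.filter (· ∈ atoms β)).erase a with hBFdef
  have hBF : ∀ b, b ∈ BF ↔ b ∈ atoms β \ {a} := by
    intro b
    simp only [hBFdef, Finset.mem_erase, Finset.mem_filter, Finset.mem_univ, true_and,
      Set.mem_diff, Set.mem_singleton_iff]
    tauto
  refine mob_crosscut_subtype hLG BF (fun S => (S : Set β)) ?_ ?_ ?_ x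
  · intro S hS z hz
    refine mem_genSub_iff.mpr ⟨(S : Set β), ?_, hz⟩
    intro b hb
    exact (hBF b).mp (Finset.mem_powerset.mp hS hb)
  · intro x S _
    simp [Set.subset_def]
  · intro x
    constructor
    · intro h
      have hx : (x : β) = ⊥ := by
        by_contra hxne
        obtain ⟨T, hT, hxT⟩ := mem_genSub_iff.mp x.2
        have hTne : T.Nonempty := by
          rcases Set.eq_empty_or_nonempty T with rfl | hne
          · rw [joinSet_empty] at hxT
            exact absurd hxT hxne
          · exact hne
        obtain ⟨t, ht⟩ := hTne
        have h1 : t ∈ BF := (hBF t).mpr (hT ht)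
        have h2 : t ≤ (x : β) := hxT.1 ht
        have : t ∈ BF.filter (fun b => b ≤ (x : β)) := Finset.mem_filter.mpr ⟨h1, h2⟩
        simp [h] at this
      exact Subtype.ext hx
    · rintro rfl
      rw [Finset.filter_eq_empty_iff]
      intro b hb hble
      have hatom : rk b = 1 := ((hBF b).mp hb).1
      have hbbot : b = ⊥ := le_bot_iff.mp hble
      rw [hbbot, rk_bot] at hatom
      omega

lemma mob_Ici (hLG : IsLocallyGeometric β) {a : β} (ha : a ∈ atoms β)
    (x : {w : β // a ≤ w}) :
    mob ⊥ x = ∑ S ∈ ((Finset.univ.filter (· ∈ atoms β)).erase a).powerset,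
      (-1 : ℤ)^S.card * (if (x : β) ∈ joinSet (insert a (S : Set β)) then 1 else 0) := by
  set BF := (Finset.univ.filter (· ∈ atoms β)).erase a with hBFdef
  have hBF : ∀ b, b ∈ BF ↔ b ∈ atoms β ∧ b ≠ a := by
    intro b
    simp only [hBFdef, Finset.mem_erase, Finset.mem_filter, Finset.mem_univ, true_and]
    tauto
  refine mob_crosscut_subtype hLG BF (fun S => insert a (S : Set β)) ?_ ?_ ?_ x
  · intro S _ z hz
    exact hz.1 (Set.mem_insert _ _)
  · intro x S _
    simp only [Set.insert_subset_iff, Set.mem_Iic]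
    constructor
    · intro h b hb
      exact h.2 hb
    · intro h
      exact ⟨x.2, fun b hb => h b hb⟩
  · intro x
    constructor
    · intro h
      refine Subtype.ext ?_
      show (x : β) = a
      by_contra hxa
      have hax : a < (x : β) := lt_of_le_of_ne x.2 (fun h' => hxa h'.symm)
      obtain ⟨b, hb, hbne, hbx⟩ := exists_atom_ne_le hLG hax
      have : b ∈ BF.filter (fun b => b ≤ (x : β)) :=
        Finset.mem_filter.mpr ⟨(hBF b).mpr ⟨hb, hbne⟩, hbx⟩
      simp [h] at this
    · rintro rfl
      rw [Finset.filter_eq_empty_iff]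
      intro b hb hble
      obtain ⟨hatom, hbne⟩ := (hBF b).mp hb
      have hba : b < a := lt_of_le_of_ne hble hbne
      have := rk_lt_rk hba
      rw [ha] at this
      rw [atoms, Set.mem_setOf_eq] at hatom
      omega

end decomp


section chidecomp
variable {β : Type} [PartialOrder β] [Fintype β] [OrderBot β]

lemma prk_genSub_le (hLG : IsLocallyGeometric β) {a : β} :
    prk {y : β // y ∈ genSub (atoms β \ {a})} ≤ prk β := by
  refine Finset.sup_le fun x _ => ?_
  rw [rk_genSub hLG (atoms_diff_subset a) x]
  exact rk_le_prk _

lemma prk_Ici_le (hLG : IsLocallyGeometric β) {a : β} (ha : a ∈ atoms β) :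
    prk {y : β // a ≤ y} + 1 ≤ prk β := by
  obtain ⟨y0, -, hy0⟩ := Finset.exists_mem_eq_sup (Finset.univ : Finset {y : β // a ≤ y})
    ⟨⟨a, le_rfl⟩, Finset.mem_univ _⟩ rk
  have h1 : rk y0 = rk (y0 : β) - 1 := rk_Ici hLG ha y0
  have h2 : 1 ≤ rk (y0 : β) := by
    have := rk_mono y0.2
    rw [ha] at this; omega
  have h3 : rk (y0 : β) ≤ prk β := rk_le_prk _
  show prk _ + 1 ≤ prk β
  rw [prk, hy0]
  omega

lemma chi_decomp (hLG : IsLocallyGeometric β) {a : β} (ha : a ∈ atoms β) :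
    charPoly β
      = Polynomial.X ^ (prk β - prk {y : β // y ∈ genSub (atoms β \ {a})})
          * charPoly {y : β // y ∈ genSub (atoms β \ {a})}
        - Polynomial.X ^ (prk β - 1 - prk {y : β // a ≤ y})
          * charPoly {y : β // a ≤ y} := by
  classical
  set AF : Finset β := Finset.univ.filter (· ∈ atoms β) with hAFdef
  set BF : Finset β := AF.erase a with hBFdef
  have haAF : a ∈ AF := by simp [hAFdef, ha]
  have haBF : a ∉ BF := Finset.notMem_erase _ _
  have hAFeq : insert a BF = AF := Finset.insert_erase haAF
  have e1 : charPoly β = ∑ S ∈ AF.powerset, ∑ x : β,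
      Polynomial.C ((-1:ℤ)^S.card * (if x ∈ joinSet (S : Set β) then 1 else 0))
        * Polynomial.X ^ (prk β - rk x) := by
    rw [← Finset.sum_comm]
    unfold charPoly
    refine Finset.sum_congr rfl fun x _ => ?_
    rw [mob_crosscut hLG AF (by intro b; simp [hAFdef]) x, map_sum, Finset.sum_mul]
  rw [← hAFeq, Finset.sum_powerset_insert haBF] at e1
  -- Part 1
  have part1 : ∑ S ∈ BF.powerset, ∑ x : β,
      Polynomial.C ((-1:ℤ)^S.card * (if x ∈ joinSet (S : Set β) then 1 else 0))
        * Polynomial.X ^ (prk β - rk x)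
      = Polynomial.X ^ (prk β - prk {y : β // y ∈ genSub (atoms β \ {a})})
          * charPoly {y : β // y ∈ genSub (atoms β \ {a})} := by
    rw [Finset.sum_comm]
    have hCX : ∀ x : β, ∑ S ∈ BF.powerset,
        Polynomial.C ((-1:ℤ)^S.card * (if x ∈ joinSet (S : Set β) then 1 else 0))
          * Polynomial.X ^ (prk β - rk x)
        = Polynomial.C (∑ S ∈ BF.powerset,
            (-1:ℤ)^S.card * (if x ∈ joinSet (S : Set β) then 1 else 0))
          * Polynomial.X ^ (prk β - rk x) := by
      intro x
      rw [map_sum, Finset.sum_mul]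
    rw [Finset.sum_congr rfl fun x _ => hCX x]
    have hvan : ∀ x : β, x ∉ genSub (atoms β \ {a}) →
        Polynomial.C (∑ S ∈ BF.powerset,
            (-1:ℤ)^S.card * (if x ∈ joinSet (S : Set β) then 1 else 0))
          * Polynomial.X ^ (prk β - rk x) = 0 := by
      intro x hx
      have : ∀ S ∈ BF.powerset,
          (-1:ℤ)^S.card * (if x ∈ joinSet (S : Set β) then 1 else 0) = 0 := by
        intro S hS
        have : x ∉ joinSet (S : Set β) := by
          intro hj
          refine hx (mem_genSub_iff.mpr ⟨(S : Set β), ?_, hj⟩)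
          intro b hb
          have := Finset.mem_powerset.mp hS hb
          simp only [hBFdef, hAFdef, Finset.mem_erase, Finset.mem_filter,
            Finset.mem_univ, true_and] at this
          exact ⟨this.2, this.1⟩
        rw [if_neg this, mul_zero]
      rw [Finset.sum_congr rfl this, Finset.sum_const_zero, map_zero, zero_mul]
    have hres : ∑ x : β, Polynomial.C (∑ S ∈ BF.powerset,
            (-1:ℤ)^S.card * (if x ∈ joinSet (S : Set β) then 1 else 0))
          * Polynomial.X ^ (prk β - rk x)
        = ∑ x : {y : β // y ∈ genSub (atoms β \ {a})}, Polynomial.C (∑ S ∈ BF.powerset,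
            (-1:ℤ)^S.card * (if (x : β) ∈ joinSet (S : Set β) then 1 else 0))
          * Polynomial.X ^ (prk β - rk (x : β)) := by
      calc ∑ x : β, Polynomial.C (∑ S ∈ BF.powerset,
              (-1:ℤ)^S.card * (if x ∈ joinSet (S : Set β) then 1 else 0))
            * Polynomial.X ^ (prk β - rk x)
          = ∑ x ∈ Finset.univ.filter (fun z : β => z ∈ genSub (atoms β \ {a})),
              Polynomial.C (∑ S ∈ BF.powerset,
                (-1:ℤ)^S.card * (if x ∈ joinSet (S : Set β) then 1 else 0))
              * Polynomial.X ^ (prk β - rk x) := by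
            refine (Finset.sum_subset (Finset.filter_subset _ _) ?_).symm
            intro x _ hx
            refine hvan x ?_
            intro hmem
            exact hx (Finset.mem_filter.mpr ⟨Finset.mem_univ _, hmem⟩)
        _ = _ := Finset.sum_subtype _ (by intro z; simp)
              (fun x => Polynomial.C (∑ S ∈ BF.powerset,
                (-1:ℤ)^S.card * (if x ∈ joinSet (S : Set β) then 1 else 0))
                * Polynomial.X ^ (prk β - rk x))
    rw [hres]
    unfold charPoly
    rw [Finset.mul_sum]
    refine Finset.sum_congr rfl fun x _ => ?_
    rw [← mob_genSub hLG ha x]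
    have h1 : rk x ≤ prk {y : β // y ∈ genSub (atoms β \ {a})} := rk_le_prk _
    have h2 : prk {y : β // y ∈ genSub (atoms β \ {a})} ≤ prk β := prk_genSub_le hLG
    have h3 : rk (x : β) = rk x := (rk_genSub hLG (atoms_diff_subset a) x).symm
    rw [h3]
    rw [show prk β - rk x = (prk β - prk {y : β // y ∈ genSub (atoms β \ {a})})
        + (prk {y : β // y ∈ genSub (atoms β \ {a})} - rk x) by omega]
    rw [pow_add]
    ring
  -- Part 2
  have part2 : ∑ S ∈ BF.powerset, ∑ x : β,
      Polynomial.C ((-1:ℤ)^(insert a S).card *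
          (if x ∈ joinSet ((insert a S : Finset β) : Set β) then 1 else 0))
        * Polynomial.X ^ (prk β - rk x)
      = -(Polynomial.X ^ (prk β - 1 - prk {y : β // a ≤ y})
          * charPoly {y : β // a ≤ y}) := by
    have hcard : ∀ S ∈ BF.powerset, ∀ x : β,
        Polynomial.C ((-1:ℤ)^(insert a S).card *
            (if x ∈ joinSet ((insert a S : Finset β) : Set β) then 1 else 0))
          * Polynomial.X ^ (prk β - rk x)
        = -(Polynomial.C ((-1:ℤ)^S.card *
            (if x ∈ joinSet (insert a (S : Set β)) then 1 else 0))
          * Polynomial.X ^ (prk β - rk x)) := by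
      intro S hS x
      have hanS : a ∉ S := fun h => haBF (Finset.mem_powerset.mp hS h)
      rw [Finset.card_insert_of_notMem hanS, Finset.coe_insert, pow_succ]
      rw [show ((-1:ℤ)^S.card * (-1) * (if x ∈ joinSet (insert a (S:Set β)) then 1 else 0))
        = -((-1:ℤ)^S.card * (if x ∈ joinSet (insert a (S:Set β)) then 1 else 0)) by ring]
      rw [map_neg]
      ring
    rw [Finset.sum_congr rfl fun S hS => Finset.sum_congr rfl fun x _ => hcard S hS x]
    have pos2 : ∑ S ∈ BF.powerset, ∑ x : β,
        Polynomial.C ((-1:ℤ)^S.card *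
            (if x ∈ joinSet (insert a (S : Set β)) then 1 else 0))
          * Polynomial.X ^ (prk β - rk x)
        = Polynomial.X ^ (prk β - 1 - prk {y : β // a ≤ y})
          * charPoly {y : β // a ≤ y} := by
      rw [Finset.sum_comm]
      have hCX : ∀ x : β, ∑ S ∈ BF.powerset,
          Polynomial.C ((-1:ℤ)^S.card * (if x ∈ joinSet (insert a (S : Set β)) then 1 else 0))
            * Polynomial.X ^ (prk β - rk x)
          = Polynomial.C (∑ S ∈ BF.powerset,
              (-1:ℤ)^S.card * (if x ∈ joinSet (insert a (S : Set β)) then 1 else 0))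
            * Polynomial.X ^ (prk β - rk x) := by
        intro x
        rw [map_sum, Finset.sum_mul]
      rw [Finset.sum_congr rfl fun x _ => hCX x]
      have hvan : ∀ x : β, ¬ a ≤ x →
          Polynomial.C (∑ S ∈ BF.powerset,
              (-1:ℤ)^S.card * (if x ∈ joinSet (insert a (S : Set β)) then 1 else 0))
            * Polynomial.X ^ (prk β - rk x) = 0 := by
        intro x hx
        have hz : ∀ S ∈ BF.powerset,
            (-1:ℤ)^S.card * (if x ∈ joinSet (insert a (S : Set β)) then 1 else 0) = 0 := by
          intro S _
          have : x ∉ joinSet (insert a (S : Set β)) :=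
            fun hj => hx (hj.1 (Set.mem_insert _ _))
          rw [if_neg this, mul_zero]
        rw [Finset.sum_congr rfl hz, Finset.sum_const_zero, map_zero, zero_mul]
      have hres : ∑ x : β, Polynomial.C (∑ S ∈ BF.powerset,
              (-1:ℤ)^S.card * (if x ∈ joinSet (insert a (S : Set β)) then 1 else 0))
            * Polynomial.X ^ (prk β - rk x)
          = ∑ x : {y : β // a ≤ y}, Polynomial.C (∑ S ∈ BF.powerset,
              (-1:ℤ)^S.card * (if (x : β) ∈ joinSet (insert a (S : Set β)) then 1 else 0))
            * Polynomial.X ^ (prk β - rk (x : β)) := by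
        calc ∑ x : β, Polynomial.C (∑ S ∈ BF.powerset,
                (-1:ℤ)^S.card * (if x ∈ joinSet (insert a (S : Set β)) then 1 else 0))
              * Polynomial.X ^ (prk β - rk x)
            = ∑ x ∈ Finset.univ.filter (fun z : β => a ≤ z),
                Polynomial.C (∑ S ∈ BF.powerset,
                  (-1:ℤ)^S.card * (if x ∈ joinSet (insert a (S : Set β)) then 1 else 0))
                * Polynomial.X ^ (prk β - rk x) := by
              refine (Finset.sum_subset (Finset.filter_subset _ _) ?_).symm
              intro x _ hx
              refine hvan x ?_
              intro hmem
              exact hx (Finset.mem_filter.mpr ⟨Finset.mem_univ _, hmem⟩)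
          _ = _ := Finset.sum_subtype _ (by intro z; simp)
                (fun x => Polynomial.C (∑ S ∈ BF.powerset,
                  (-1:ℤ)^S.card * (if x ∈ joinSet (insert a (S : Set β)) then 1 else 0))
                  * Polynomial.X ^ (prk β - rk x))
      rw [hres]
      unfold charPoly
      rw [Finset.mul_sum]
      refine Finset.sum_congr rfl fun x _ => ?_
      rw [← mob_Ici hLG ha x]
      have h1 : rk x ≤ prk {y : β // a ≤ y} := rk_le_prk _
      have h2 : prk {y : β // a ≤ y} + 1 ≤ prk β := prk_Ici_le hLG ha
      have h3 : rk x = rk (x : β) - 1 := rk_Ici hLG ha x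
      have h4 : 1 ≤ rk (x : β) := by
        have := rk_mono x.2
        rw [ha] at this; omega
      have h5 : rk (x : β) ≤ prk β := rk_le_prk _
      rw [show prk β - rk (x : β) = (prk β - 1 - prk {y : β // a ≤ y})
          + (prk {y : β // a ≤ y} - rk x) by omega]
      rw [pow_add]
      ring
    rw [← pos2]
    rw [← Finset.sum_neg_distrib]
    refine Finset.sum_congr rfl fun S hS => ?_
    rw [← Finset.sum_neg_distrib]
  rw [e1, part1, part2]
  ring

end chidecomp


end PosetArr

namespace PosetArr
/-- Every inductive poset is divisional. -/
theorem inductive_isDivisional (β : Type) [po : PartialOrder β] [fin : Fintype β]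
    [bo : OrderBot β] (h : IsInductivePoset β po fin bo) :
    IsDivisionalPoset β po fin bo := by
  induction h with
  | triv β h => exact IsDivisionalPoset.triv β h
  | step β hLG a ha hres hdel hdvd ihres ihdel =>
    refine IsDivisionalPoset.step β hLG a ha ihres ?_
    rw [chi_decomp hLG ha]
    exact dvd_sub (Dvd.dvd.mul_left hdvd _) (Dvd.dvd.mul_left dvd_rfl _)
end PosetArr
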